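/- (PDF of the skew Student's t distribution as a Gaussian-gamma scale mixture) Let p, q ≥ 1, μ ∈ ℝ^p, Σ a positive definite p×p real matrix, Λ a p×q real matrix, and ν > 0. Define Ω = Σ + ΛΛᵀ, Δ = I_q − ΛᵀΩ^(−1)Λ (positive definite), m(y) = ΛᵀΩ^(−1)(y−μ) and d(y) = (y−μ)ᵀΩ^(−1)(y−μ). Then for every y ∈ ℝ^p, ∫_{t ∈ (0,∞)^q} ∫_{g>0} 2^q · N_p(y | μ + Λt, Σ/g) · N_q(t | 0, I_q/g) · Gamma(g | ν/2, ν/2) dg dt = 2^q · t_p(y | μ, Ω, ν) · T_q( m(y)·√((ν+p)/(ν+d(y))) | 0, Δ, p+ν ). -/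

import Mathlib

open MeasureTheory Set Matrix

lemma aux_dot_flip {p q : ℕ} (L : Matrix (Fin p) (Fin q) ℝ) (u : Fin q → ℝ) (v : Fin p → ℝ) :
    (L *ᵥ u) ⬝ᵥ v = u ⬝ᵥ (Lᵀ *ᵥ v) := by
  rw [dotProduct_comm, dotProduct_mulVec, mulVec_transpose, dotProduct_comm]

lemma aux_dot_sym {n : ℕ} (M : Matrix (Fin n) (Fin n) ℝ) (hM : Mᵀ = M) (u v : Fin n → ℝ) :
    u ⬝ᵥ (M *ᵥ v) = v ⬝ᵥ (M *ᵥ u) := by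
  conv_lhs => rw [← hM]
  rw [mulVec_transpose, dotProduct_comm, ← dotProduct_mulVec]

lemma aux_exp_merge (a b c : ℝ) :
    Real.exp a * (Real.exp b * c) = Real.exp (a + b) * c := by
  rw [Real.exp_add]; ring

lemma aux_exp_mul (a b : ℝ) : Real.exp a * Real.exp b = Real.exp (a + b) :=
  (Real.exp_add a b).symm

lemma aux_point (p q : ℕ) (ν d w tt D g : ℝ) (hg : 0 < g) (hν : 0 < ν) (hD : 0 < D) :
    (2:ℝ)^q * ((g / (2*Real.pi)) ^ ((p:ℝ)/2) * D ^ (-(1:ℝ)/2) * Real.exp (-(g * (d + w - tt))/2))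
      * ((g / (2*Real.pi)) ^ ((q:ℝ)/2) * Real.exp (-(g * tt)/2))
      * ((ν/2) ^ (ν/2) * g ^ (ν/2 - 1) * Real.exp (-(ν/2 * g)) / Real.Gamma (ν/2))
    = ((2:ℝ)^q * (2*Real.pi) ^ (-(((p:ℝ) + (q:ℝ))/2)) * D ^ (-(1:ℝ)/2) * (ν/2) ^ (ν/2) / Real.Gamma (ν/2))
      * (g ^ ((ν + (p:ℝ) + (q:ℝ))/2 - 1) * Real.exp (-(((ν + (d + w))/2) * g))) := by
  have h2π : (0:ℝ) < 2 * Real.pi := by positivity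
  have hG1 : (0:ℝ) < Real.Gamma (ν/2) := Real.Gamma_pos_of_pos (by positivity)
  have h2q : (0:ℝ) < (2:ℝ)^q := by positivity
  have hν2 : (0:ℝ) < ν/2 := by positivity
  rw [show ((2:ℝ)^q : ℝ) = Real.exp (Real.log ((2:ℝ)^q)) from (Real.exp_log h2q).symm,
      show Real.Gamma (ν/2) = Real.exp (Real.log (Real.Gamma (ν/2))) from (Real.exp_log hG1).symm]
  simp only [Real.rpow_def_of_pos (div_pos hg h2π), Real.rpow_def_of_pos hg,
    Real.rpow_def_of_pos h2π, Real.rpow_def_of_pos hD, Real.rpow_def_of_pos hν2,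
    Real.log_div hg.ne' h2π.ne']
  simp only [div_eq_mul_inv, mul_inv, ← Real.exp_neg, inv_inv]
  simp only [mul_assoc, aux_exp_merge, aux_exp_mul]
  rw [Real.exp_eq_exp]
  ring

lemma aux_scalar (p q : ℕ) (ν d w D DO : ℝ) (hν : 0 < ν) (hd : 0 ≤ d) (hw : 0 ≤ w)
    (hD : 0 < D) (hDO : 0 < DO) :
    ((2:ℝ)^q * (2*Real.pi) ^ (-(((p:ℝ) + (q:ℝ))/2)) * D ^ (-(1:ℝ)/2) * (ν/2) ^ (ν/2) / Real.Gamma (ν/2))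
      * ((1/((ν + (d + w))/2)) ^ ((ν + (p:ℝ) + (q:ℝ))/2) * Real.Gamma ((ν + (p:ℝ) + (q:ℝ))/2))
    = (2:ℝ)^q *
        (Real.Gamma ((ν + (p:ℝ))/2) / ((ν * Real.pi) ^ ((p:ℝ)/2) * Real.Gamma (ν/2) * DO ^ ((1:ℝ)/2))
          * ((ν + d)/ν) ^ (-((ν + (p:ℝ))/2))) *
        (Real.sqrt ((ν + (p:ℝ))/(ν + d)))^q *
        (Real.Gamma ((ν + (p:ℝ) + (q:ℝ))/2) /
            (((ν + (p:ℝ)) * Real.pi) ^ ((q:ℝ)/2) * Real.Gamma ((ν + (p:ℝ))/2) * (D/DO) ^ ((1:ℝ)/2))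
          * ((ν + (d + w))/(ν + d)) ^ (-((ν + (p:ℝ) + (q:ℝ))/2))) := by
  have hπ := Real.pi_pos
  have hA : (0:ℝ) < ν + d := by linarith
  have hB : (0:ℝ) < ν + (d + w) := by linarith
  have hνP : (0:ℝ) < ν + (p:ℝ) := by positivity
  have hG1 : (0:ℝ) < Real.Gamma (ν/2) := Real.Gamma_pos_of_pos (by positivity)
  have hG2 : (0:ℝ) < Real.Gamma ((ν + (p:ℝ))/2) := Real.Gamma_pos_of_pos (by positivity)
  have hG3 : (0:ℝ) < Real.Gamma ((ν + (p:ℝ) + (q:ℝ))/2) := Real.Gamma_pos_of_pos (by positivity)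
  have h2q : (0:ℝ) < (2:ℝ)^q := by positivity
  rw [← Real.rpow_natCast (Real.sqrt ((ν + (p:ℝ))/(ν + d))) q]
  rw [show ((2:ℝ)^q : ℝ) = Real.exp (Real.log ((2:ℝ)^q)) from (Real.exp_log h2q).symm,
      show Real.Gamma (ν/2) = Real.exp (Real.log (Real.Gamma (ν/2))) from (Real.exp_log hG1).symm,
      show Real.Gamma ((ν + (p:ℝ))/2) = Real.exp (Real.log (Real.Gamma ((ν + (p:ℝ))/2)))
        from (Real.exp_log hG2).symm,
      show Real.Gamma ((ν + (p:ℝ) + (q:ℝ))/2)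
          = Real.exp (Real.log (Real.Gamma ((ν + (p:ℝ) + (q:ℝ))/2)))
        from (Real.exp_log hG3).symm]
  simp only [Real.rpow_def_of_pos (show (0:ℝ) < 2*Real.pi by positivity),
    Real.rpow_def_of_pos hD, Real.rpow_def_of_pos (show (0:ℝ) < ν/2 by positivity),
    Real.rpow_def_of_pos (show (0:ℝ) < 1/((ν + (d + w))/2) by positivity),
    Real.rpow_def_of_pos (show (0:ℝ) < ν * Real.pi by positivity),
    Real.rpow_def_of_pos hDO,
    Real.rpow_def_of_pos (show (0:ℝ) < (ν + d)/ν by positivity),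
    Real.rpow_def_of_pos (show (0:ℝ) < (ν + (p:ℝ)) * Real.pi by positivity),
    Real.rpow_def_of_pos (show (0:ℝ) < D/DO by positivity),
    Real.rpow_def_of_pos (show (0:ℝ) < (ν + (d + w))/(ν + d) by positivity),
    Real.rpow_def_of_pos (Real.sqrt_pos.2 (show (0:ℝ) < (ν + (p:ℝ))/(ν + d) by positivity))]
  rw [one_div, Real.log_inv]
  simp only [Real.log_sqrt (show (0:ℝ) ≤ (ν + (p:ℝ))/(ν + d) by positivity),
    Real.log_div hB.ne' (two_ne_zero), Real.log_div hA.ne' hν.ne',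
    Real.log_div hD.ne' hDO.ne', Real.log_div (by linarith : (ν + (d+w)) ≠ 0) hA.ne',
    Real.log_div hνP.ne' hA.ne',
    Real.log_mul (two_ne_zero) Real.pi_ne_zero, Real.log_mul hν.ne' Real.pi_ne_zero,
    Real.log_mul hνP.ne' Real.pi_ne_zero, Real.log_div hν.ne' (two_ne_zero)]
  simp only [div_eq_mul_inv, mul_inv, ← Real.exp_neg, inv_inv]
  simp only [mul_assoc, aux_exp_merge, aux_exp_mul]
  rw [Real.exp_eq_exp]
  ring

/-- PDF of the skew Student's t distribution as a Gaussian-gamma scale mixture: with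
`Ω = Σ + ΛΛᵀ`, `Δ = I_q − ΛᵀΩ⁻¹Λ`, `m(y) = ΛᵀΩ⁻¹(y−μ)` and `d(y) = (y−μ)ᵀΩ⁻¹(y−μ)`,
`∫_{(0,∞)^q} ∫_{g>0} 2^q·N_p(y|μ+Λt,Σ/g)·N_q(t|0,I_q/g)·Gamma(g|ν/2,ν/2) dg dt
= 2^q·t_p(y|μ,Ω,ν)·T_q(m(y)·√((ν+p)/(ν+d(y)))|0,Δ,p+ν)`. -/
theorem stmt_19 (p q : ℕ) (hp : 1 ≤ p) (hq : 1 ≤ q)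
    (μ : Fin p → ℝ) (Sg : Matrix (Fin p) (Fin p) ℝ) (hSg : Sg.PosDef)
    (L : Matrix (Fin p) (Fin q) ℝ) (ν : ℝ) (hν : 0 < ν)
    (y : Fin p → ℝ) :
    let Om := Sg + L * Lᵀ
    let Δ : Matrix (Fin q) (Fin q) ℝ := 1 - Lᵀ * Om⁻¹ * L
    let m : Fin q → ℝ := Lᵀ *ᵥ (Om⁻¹ *ᵥ (y - μ))
    let d : ℝ := (y - μ) ⬝ᵥ (Om⁻¹ *ᵥ (y - μ))
    let gam : ℝ → ℝ → ℝ → ℝ := fun a r g =>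
      r ^ a * g ^ (a - 1) * Real.exp (-(r * g)) / Real.Gamma a
    let Np : ℝ → (Fin q → ℝ) → ℝ := fun g t =>
      (g / (2 * Real.pi)) ^ ((p : ℝ) / 2) * Sg.det ^ (-(1 : ℝ) / 2) *
        Real.exp (-(g * ((y - μ - L *ᵥ t) ⬝ᵥ (Sg⁻¹ *ᵥ (y - μ - L *ᵥ t)))) / 2)
    let Nq : ℝ → (Fin q → ℝ) → ℝ := fun g t =>
      (g / (2 * Real.pi)) ^ ((q : ℝ) / 2) * Real.exp (-(g * (t ⬝ᵥ t)) / 2)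
    let tdp : ℝ → (Fin p → ℝ) → ℝ := fun df z =>
      Real.Gamma ((df + p) / 2) /
          ((df * Real.pi) ^ ((p : ℝ) / 2) * Real.Gamma (df / 2) * Om.det ^ ((1 : ℝ) / 2)) *
        (1 + (z ⬝ᵥ (Om⁻¹ *ᵥ z)) / df) ^ (-((df + p) / 2))
    let tdq : ℝ → (Fin q → ℝ) → ℝ := fun df v =>
      Real.Gamma ((df + q) / 2) /
          ((df * Real.pi) ^ ((q : ℝ) / 2) * Real.Gamma (df / 2) * Δ.det ^ ((1 : ℝ) / 2)) *
        (1 + (v ⬝ᵥ (Δ⁻¹ *ᵥ v)) / df) ^ (-((df + q) / 2))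
    let Tq : ℝ → (Fin q → ℝ) → ℝ := fun df z => ∫ v in Iic z, tdq df v
    (∫ t in Set.univ.pi fun _ : Fin q => Ioi (0:ℝ),
        ∫ g in Ioi (0:ℝ), (2:ℝ) ^ q * Np g t * Nq g t * gam (ν / 2) (ν / 2) g) =
      (2:ℝ) ^ q * tdp ν (y - μ) *
        Tq ((p : ℝ) + ν) (Real.sqrt ((ν + p) / (ν + d)) • m) := by
  intro Om Δ m d gam Np Nq tdp tdq Tq
  obtain ⟨e, he⟩ : ∃ v : Fin p → ℝ, v = y - μ := ⟨_, rfl⟩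
  obtain ⟨K, hKdef⟩ : ∃ K' : Matrix (Fin q) (Fin q) ℝ, K' = 1 + Lᵀ * Sg⁻¹ * L := ⟨_, rfl⟩
  have hm : m = Lᵀ *ᵥ (Om⁻¹ *ᵥ e) := by rw [he]
  have hd : d = e ⬝ᵥ (Om⁻¹ *ᵥ e) := by rw [he]
  -- basic matrix facts
  have hSgU : IsUnit Sg.det := isUnit_iff_ne_zero.2 hSg.det_pos.ne'
  have hLLt : (L * Lᵀ).PosSemidef := by
    simpa using Matrix.posSemidef_conjTranspose_mul_self Lᵀ
  have hOm : Om.PosDef := hSg.add_posSemidef hLLt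
  have hOmU : IsUnit Om.det := isUnit_iff_ne_zero.2 hOm.det_pos.ne'
  have hK : K.PosDef := by
    have : (Lᵀ * Sg⁻¹ * L).PosSemidef := by
      simpa [Matrix.mul_assoc] using hSg.inv.posSemidef.mul_mul_conjTranspose_same Lᵀ
    rw [hKdef]
    exact Matrix.PosDef.one.add_posSemidef this
  have hKU : IsUnit K.det := isUnit_iff_ne_zero.2 hK.det_pos.ne'
  have hSgSym : Sgᵀ = Sg := hSg.1
  have hSgInvSym : (Sg⁻¹)ᵀ = Sg⁻¹ := by rw [Matrix.transpose_nonsing_inv, hSgSym]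
  have hOmSym : Omᵀ = Om := hOm.1
  have hOmInvSym : (Om⁻¹)ᵀ = Om⁻¹ := by rw [Matrix.transpose_nonsing_inv, hOmSym]
  have hKSym : Kᵀ = K := by
    rw [hKdef, Matrix.transpose_add, Matrix.transpose_one, Matrix.transpose_mul,
      Matrix.transpose_mul, Matrix.transpose_transpose, hSgInvSym, Matrix.mul_assoc]
  have hOmOm : Om⁻¹ * Om = 1 := Matrix.nonsing_inv_mul _ hOmU
  have hOmOm' : Om * Om⁻¹ = 1 := Matrix.mul_nonsing_inv _ hOmU
  have hSgSg : Sg * Sg⁻¹ = 1 := Matrix.mul_nonsing_inv _ hSgU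
  have hSgSg' : Sg⁻¹ * Sg = 1 := Matrix.nonsing_inv_mul _ hSgU
  -- K * Lᵀ = Lᵀ * Sg⁻¹ * Om
  have hKL : K * Lᵀ = Lᵀ * Sg⁻¹ * Om := by
    have : Om = Sg + L * Lᵀ := rfl
    rw [hKdef, this, Matrix.add_mul, Matrix.one_mul, Matrix.mul_add]
    rw [Matrix.mul_assoc (Lᵀ) (Sg⁻¹) Sg, hSgSg', Matrix.mul_one]
    rw [Matrix.mul_assoc (Lᵀ * Sg⁻¹) L Lᵀ]
  -- Δ K = 1
  have hΔK : Δ * K = 1 := by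
    have h2 : L + L * (Lᵀ * (Sg⁻¹ * L)) = Om * (Sg⁻¹ * L) := by
      show _ = (Sg + L * Lᵀ) * _
      rw [Matrix.add_mul, ← Matrix.mul_assoc Sg Sg⁻¹ L, hSgSg, Matrix.one_mul,
        Matrix.mul_assoc L Lᵀ (Sg⁻¹ * L)]
    have main : Lᵀ * Om⁻¹ * L + (Lᵀ * Om⁻¹ * L) * (Lᵀ * Sg⁻¹ * L) = Lᵀ * Sg⁻¹ * L := by
      simp only [Matrix.mul_assoc]
      rw [← Matrix.mul_add, ← Matrix.mul_add, h2, ← Matrix.mul_assoc Om⁻¹ Om, hOmOm,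
        Matrix.one_mul]
    show (1 - Lᵀ * Om⁻¹ * L) * K = 1
    calc (1 - Lᵀ * Om⁻¹ * L) * K
        = 1 + Lᵀ * Sg⁻¹ * L -
            (Lᵀ * Om⁻¹ * L + (Lᵀ * Om⁻¹ * L) * (Lᵀ * Sg⁻¹ * L)) := by
          rw [hKdef, Matrix.sub_mul, Matrix.one_mul, Matrix.mul_add, Matrix.mul_one]
      _ = 1 := by rw [main]; abel
  have hKinv : K⁻¹ = Δ := Matrix.inv_eq_left_inv hΔK
  have hΔ : Δ.PosDef := hKinv ▸ hK.inv
  have hΔU : IsUnit Δ.det := isUnit_iff_ne_zero.2 hΔ.det_pos.ne'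
  have hΔinv : Δ⁻¹ = K := by rw [← hKinv, Matrix.nonsing_inv_nonsing_inv _ hKU]
  -- determinants
  have hdetOm : Om.det = Sg.det * K.det := by
    have hfact : Sg * (1 + Sg⁻¹ * (L * Lᵀ)) = Om := by
      show _ = Sg + L * Lᵀ
      rw [Matrix.mul_add, Matrix.mul_one, ← Matrix.mul_assoc Sg Sg⁻¹ (L * Lᵀ), hSgSg,
        Matrix.one_mul]
    rw [← hfact, Matrix.det_mul]
    congr 1
    rw [← Matrix.mul_assoc Sg⁻¹ L Lᵀ, Matrix.det_one_add_mul_comm, hKdef, Matrix.mul_assoc]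
  have hdetΔ : Δ.det = Sg.det / Om.det := by
    rw [← hKinv, Matrix.det_nonsing_inv, Ring.inverse_eq_inv', hdetOm]
    rw [inv_eq_one_div, div_eq_div_iff hK.det_pos.ne'
      (mul_pos hSg.det_pos hK.det_pos).ne', one_mul]
  -- vector identities
  have hKm : K *ᵥ m = Lᵀ *ᵥ (Sg⁻¹ *ᵥ e) := by
    rw [hm, Matrix.mulVec_mulVec (Om⁻¹ *ᵥ e) K Lᵀ, Matrix.mulVec_mulVec e (K * Lᵀ) Om⁻¹, hKL,
      Matrix.mul_assoc (Lᵀ * Sg⁻¹) Om Om⁻¹, hOmOm', Matrix.mul_one,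
      Matrix.mulVec_mulVec e Lᵀ Sg⁻¹]
  have hmKm : m ⬝ᵥ (K *ᵥ m) = e ⬝ᵥ (Sg⁻¹ *ᵥ e) - d := by
    have hLm : L *ᵥ m = e - Sg *ᵥ (Om⁻¹ *ᵥ e) := by
      rw [hm, Matrix.mulVec_mulVec (Om⁻¹ *ᵥ e) L Lᵀ]
      have hOS : L * Lᵀ = Om - Sg := by
        show _ = Sg + L * Lᵀ - Sg; rw [add_sub_cancel_left]
      rw [hOS, Matrix.sub_mulVec, Matrix.mulVec_mulVec e Om Om⁻¹, hOmOm', Matrix.one_mulVec]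
    have hd_eq : (Sg *ᵥ (Om⁻¹ *ᵥ e)) ⬝ᵥ (Sg⁻¹ *ᵥ e) = d := by
      rw [aux_dot_flip Sg (Om⁻¹ *ᵥ e) (Sg⁻¹ *ᵥ e), hSgSym, Matrix.mulVec_mulVec e Sg Sg⁻¹,
        hSgSg, Matrix.one_mulVec, hd]
      exact dotProduct_comm _ _
    calc m ⬝ᵥ (K *ᵥ m) = m ⬝ᵥ (Lᵀ *ᵥ (Sg⁻¹ *ᵥ e)) := by rw [hKm]
      _ = (L *ᵥ m) ⬝ᵥ (Sg⁻¹ *ᵥ e) := (aux_dot_flip L m (Sg⁻¹ *ᵥ e)).symm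
      _ = e ⬝ᵥ (Sg⁻¹ *ᵥ e) - (Sg *ᵥ (Om⁻¹ *ᵥ e)) ⬝ᵥ (Sg⁻¹ *ᵥ e) := by
          rw [hLm, sub_dotProduct]
      _ = e ⬝ᵥ (Sg⁻¹ *ᵥ e) - d := by rw [hd_eq]
  have hquad : ∀ t : Fin q → ℝ,
      (e - L *ᵥ t) ⬝ᵥ (Sg⁻¹ *ᵥ (e - L *ᵥ t)) + t ⬝ᵥ t
        = d + (m - t) ⬝ᵥ (K *ᵥ (m - t)) := by
    intro t
    have c1 : (L *ᵥ t) ⬝ᵥ (Sg⁻¹ *ᵥ e) = t ⬝ᵥ (K *ᵥ m) := by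
      rw [aux_dot_flip, hKm]
    have c2 : e ⬝ᵥ (Sg⁻¹ *ᵥ (L *ᵥ t)) = t ⬝ᵥ (K *ᵥ m) := by
      rw [aux_dot_sym Sg⁻¹ hSgInvSym e (L *ᵥ t), c1]
    have c3 : (L *ᵥ t) ⬝ᵥ (Sg⁻¹ *ᵥ (L *ᵥ t)) = t ⬝ᵥ ((Lᵀ * Sg⁻¹ * L) *ᵥ t) := by
      rw [aux_dot_flip, Matrix.mulVec_mulVec (L *ᵥ t) Lᵀ Sg⁻¹,
        Matrix.mulVec_mulVec t (Lᵀ * Sg⁻¹) L]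
    have h1 : (e - L *ᵥ t) ⬝ᵥ (Sg⁻¹ *ᵥ (e - L *ᵥ t))
        = e ⬝ᵥ (Sg⁻¹ *ᵥ e) - 2 * (t ⬝ᵥ (K *ᵥ m)) + t ⬝ᵥ ((Lᵀ * Sg⁻¹ * L) *ᵥ t) := by
      rw [Matrix.mulVec_sub, dotProduct_sub, sub_dotProduct, sub_dotProduct, c1, c2, c3]
      ring
    have h2 : (m - t) ⬝ᵥ (K *ᵥ (m - t))
        = m ⬝ᵥ (K *ᵥ m) - 2 * (t ⬝ᵥ (K *ᵥ m)) + t ⬝ᵥ (K *ᵥ t) := by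
      rw [Matrix.mulVec_sub, dotProduct_sub, sub_dotProduct, sub_dotProduct,
        aux_dot_sym K hKSym m t]
      ring
    have h3 : t ⬝ᵥ ((Lᵀ * Sg⁻¹ * L) *ᵥ t) + t ⬝ᵥ t = t ⬝ᵥ (K *ᵥ t) := by
      rw [hKdef, Matrix.add_mulVec, Matrix.one_mulVec, dotProduct_add]
      ring
    rw [h1, h2, hmKm]
    linarith [h3]
  -- positivity
  have hπ : (0:ℝ) < Real.pi := Real.pi_pos
  have hd0 : 0 ≤ d := by rw [hd]; simpa using hOm.inv.posSemidef.dotProduct_mulVec_nonneg e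
  have hw0 : ∀ v : Fin q → ℝ, 0 ≤ v ⬝ᵥ (K *ᵥ v) := fun v => by simpa using hK.posSemidef.dotProduct_mulVec_nonneg v
  have hνd : (0:ℝ) < ν + d := by linarith
  have hνp : (0:ℝ) < ν + (p:ℝ) := by positivity
  have hc : (0:ℝ) < (ν + (p:ℝ)) / (ν + d) := by positivity
  set r : ℝ := Real.sqrt ((ν + (p:ℝ)) / (ν + d)) with hrdef
  have hr : 0 < r := Real.sqrt_pos.2 hc
  have hrr : r * r = (ν + (p:ℝ)) / (ν + d) := Real.mul_self_sqrt hc.le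
  set dfq : ℝ := (p:ℝ) + ν with hdfq
  -- the pointwise key identity
  have key : ∀ t : Fin q → ℝ,
      (∫ g in Ioi (0:ℝ), (2:ℝ) ^ q * Np g t * Nq g t * gam (ν / 2) (ν / 2) g)
        = ((2:ℝ) ^ q * tdp ν e * r ^ q) * tdq dfq (r • (m - t)) := by
    intro t
    obtain ⟨w, hwdef⟩ : ∃ w', w' = (m - t) ⬝ᵥ (K *ᵥ (m - t)) := ⟨_, rfl⟩
    have hw0' : 0 ≤ w := hwdef ▸ hw0 (m - t)
    have hQ : (y - μ - L *ᵥ t) ⬝ᵥ (Sg⁻¹ *ᵥ (y - μ - L *ᵥ t)) = d + w - t ⬝ᵥ t := by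
      have hq := hquad t
      rw [← hwdef] at hq
      have hye : y - μ - L *ᵥ t = e - L *ᵥ t := by rw [he]
      rw [hye]
      linarith [hq]
    have hb : (0:ℝ) < (ν + (d + w))/2 := by linarith
    have hs : (0:ℝ) < (ν + (p:ℝ) + (q:ℝ))/2 := by positivity
    have hNp : ∀ g : ℝ, Np g t = (g / (2 * Real.pi)) ^ ((p : ℝ) / 2) *
        Sg.det ^ (-(1 : ℝ) / 2) * Real.exp (-(g * (d + w - t ⬝ᵥ t)) / 2) := by
      intro g
      show (g / (2 * Real.pi)) ^ ((p : ℝ) / 2) * Sg.det ^ (-(1 : ℝ) / 2) *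
        Real.exp (-(g * ((y - μ - L *ᵥ t) ⬝ᵥ (Sg⁻¹ *ᵥ (y - μ - L *ᵥ t)))) / 2) = _
      rw [hQ]
    have hIg : ∀ g ∈ Ioi (0:ℝ), (2:ℝ) ^ q * Np g t * Nq g t * gam (ν / 2) (ν / 2) g
        = ((2:ℝ)^q * (2*Real.pi) ^ (-(((p:ℝ) + (q:ℝ))/2)) * Sg.det ^ (-(1:ℝ)/2) *
            (ν/2) ^ (ν/2) / Real.Gamma (ν/2))
          * (g ^ ((ν + (p:ℝ) + (q:ℝ))/2 - 1) * Real.exp (-(((ν + (d + w))/2) * g))) := by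
      intro g hg
      rw [hNp g]
      exact aux_point p q ν d w (t ⬝ᵥ t) Sg.det g hg hν hSg.det_pos
    have hX : (r • (m - t)) ⬝ᵥ (Δ⁻¹ *ᵥ (r • (m - t))) = (ν + (p:ℝ))/(ν + d) * w := by
      rw [hΔinv, Matrix.mulVec_smul, dotProduct_smul, smul_dotProduct, smul_eq_mul,
        smul_eq_mul, ← hwdef, ← mul_assoc, hrr]
    have htdp : tdp ν e = Real.Gamma ((ν + (p:ℝ))/2) /
        ((ν * Real.pi) ^ ((p:ℝ)/2) * Real.Gamma (ν/2) * Om.det ^ ((1:ℝ)/2)) *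
        ((ν + d)/ν) ^ (-((ν + (p:ℝ))/2)) := by
      show Real.Gamma ((ν + (p:ℝ))/2) /
          ((ν * Real.pi) ^ ((p:ℝ)/2) * Real.Gamma (ν/2) * Om.det ^ ((1:ℝ)/2)) *
          (1 + (e ⬝ᵥ (Om⁻¹ *ᵥ e)) / ν) ^ (-((ν + (p:ℝ))/2)) = _
      rw [← hd, show (1 + d/ν) = (ν + d)/ν from by field_simp]
    have htdq : tdq dfq (r • (m - t)) = Real.Gamma ((ν + (p:ℝ) + (q:ℝ))/2) /
        (((ν + (p:ℝ)) * Real.pi) ^ ((q:ℝ)/2) * Real.Gamma ((ν + (p:ℝ))/2) *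
          (Sg.det/Om.det) ^ ((1:ℝ)/2)) *
        ((ν + (d + w))/(ν + d)) ^ (-((ν + (p:ℝ) + (q:ℝ))/2)) := by
      show Real.Gamma ((dfq + (q:ℝ))/2) /
          ((dfq * Real.pi) ^ ((q:ℝ)/2) * Real.Gamma (dfq/2) * Δ.det ^ ((1:ℝ)/2)) *
          (1 + ((r • (m - t)) ⬝ᵥ (Δ⁻¹ *ᵥ (r • (m - t)))) / dfq) ^ (-((dfq + (q:ℝ))/2)) = _
      rw [hX, hdetΔ, hdfq, show ((p:ℝ) + ν) = ν + (p:ℝ) from add_comm _ _,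
        show (1 + ((ν + (p:ℝ))/(ν + d) * w)/(ν + (p:ℝ))) = (ν + (d + w))/(ν + d) from by
          field_simp
          ring]
    calc (∫ g in Ioi (0:ℝ), (2:ℝ) ^ q * Np g t * Nq g t * gam (ν / 2) (ν / 2) g)
        = ∫ g in Ioi (0:ℝ), ((2:ℝ)^q * (2*Real.pi) ^ (-(((p:ℝ) + (q:ℝ))/2)) *
            Sg.det ^ (-(1:ℝ)/2) * (ν/2) ^ (ν/2) / Real.Gamma (ν/2))
          * (g ^ ((ν + (p:ℝ) + (q:ℝ))/2 - 1) * Real.exp (-(((ν + (d + w))/2) * g))) :=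
          setIntegral_congr_fun measurableSet_Ioi (fun g hg => hIg g hg)
      _ = ((2:ℝ)^q * (2*Real.pi) ^ (-(((p:ℝ) + (q:ℝ))/2)) * Sg.det ^ (-(1:ℝ)/2) *
            (ν/2) ^ (ν/2) / Real.Gamma (ν/2))
          * ((1/((ν + (d + w))/2)) ^ ((ν + (p:ℝ) + (q:ℝ))/2) *
            Real.Gamma ((ν + (p:ℝ) + (q:ℝ))/2)) := by
          rw [MeasureTheory.integral_const_mul, Real.integral_rpow_mul_exp_neg_mul_Ioi hs hb]
      _ = ((2:ℝ) ^ q * tdp ν e * r ^ q) * tdq dfq (r • (m - t)) := by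
          rw [htdp, htdq]
          exact aux_scalar p q ν d w Sg.det Om.det hν hd0 hw0' hSg.det_pos hOm.det_pos
  -- change of variables for the CDF integral
  have hcov : Tq dfq (r • m) = r ^ q * ∫ t in Set.univ.pi fun _ : Fin q => Ioi (0:ℝ),
      tdq dfq (r • (m - t)) := by
    show (∫ v in Iic (r • m), tdq dfq v) = _
    rw [← integral_indicator measurableSet_Iic]
    have h1 : (∫ v, (Iic (r • m)).indicator (tdq dfq) v)
        = ∫ x, (Iic (r • m)).indicator (tdq dfq) ((r • m) - x) := by
      calc ∫ v, (Iic (r • m)).indicator (tdq dfq) v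
          = ∫ x, (Iic (r • m)).indicator (tdq dfq) ((r • m) + x) :=
            (integral_add_left_eq_self ((Iic (r • m)).indicator (tdq dfq)) (r • m)).symm
        _ = ∫ x, (Iic (r • m)).indicator (tdq dfq) ((r • m) + (-x)) :=
            (integral_neg_eq_self
              (fun x => (Iic (r • m)).indicator (tdq dfq) ((r • m) + x)) volume).symm
        _ = ∫ x, (Iic (r • m)).indicator (tdq dfq) ((r • m) - x) := by
            simp only [← sub_eq_add_neg]
    rw [h1]
    have h2 : ∀ x : Fin q → ℝ, (Iic (r • m)).indicator (tdq dfq) ((r • m) - x)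
        = (Ici (0 : Fin q → ℝ)).indicator (fun u => tdq dfq ((r • m) - u)) x := by
      intro x
      by_cases hx : x ∈ Ici (0 : Fin q → ℝ)
      · rw [indicator_of_mem hx, indicator_of_mem (mem_Iic.2 (sub_le_self _ (mem_Ici.1 hx)))]
      · rw [indicator_of_notMem hx, indicator_of_notMem]
        intro hmem
        exact hx (mem_Ici.2 ((sub_le_self_iff _).1 (mem_Iic.1 hmem)))
    simp only [h2]
    have h3 := MeasureTheory.Measure.integral_comp_smul_of_nonneg
      (volume : Measure (Fin q → ℝ))
      ((Ici (0 : Fin q → ℝ)).indicator (fun u => tdq dfq ((r • m) - u))) r (hR := hr.le)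
    rw [Module.finrank_fin_fun, smul_eq_mul] at h3
    have h4 : (∫ x, (Ici (0 : Fin q → ℝ)).indicator (fun u => tdq dfq ((r • m) - u)) x)
        = r ^ q * ∫ x, (Ici (0 : Fin q → ℝ)).indicator
            (fun u => tdq dfq ((r • m) - u)) (r • x) := by
      rw [h3, ← mul_assoc, mul_inv_cancel₀ (pow_ne_zero _ hr.ne'), one_mul]
    rw [h4]
    congr 1
    have hmem : ∀ x : Fin q → ℝ, r • x ∈ Ici (0 : Fin q → ℝ) ↔ x ∈ Ici (0 : Fin q → ℝ) := by
      intro x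
      simp only [mem_Ici]
      constructor
      · intro h i
        have h2i : (0:ℝ) ≤ r * x i := h i
        by_contra hneg
        push_neg at hneg
        exact absurd h2i (not_le.2 (mul_neg_of_pos_of_neg hr hneg))
      · intro h i
        exact mul_nonneg hr.le (h i)
    have h5 : ∀ x : Fin q → ℝ, (Ici (0 : Fin q → ℝ)).indicator
        (fun u => tdq dfq ((r • m) - u)) (r • x)
        = (Ici (0 : Fin q → ℝ)).indicator (fun t => tdq dfq (r • (m - t))) x := by
      intro x
      by_cases hx : x ∈ Ici (0 : Fin q → ℝ)
      · rw [indicator_of_mem ((hmem x).2 hx), indicator_of_mem hx, smul_sub]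
      · rw [indicator_of_notMem (fun h => hx ((hmem x).1 h)), indicator_of_notMem hx]
    simp only [h5]
    rw [integral_indicator measurableSet_Ici]
    refine setIntegral_congr_set ?_
    have hae := MeasureTheory.Measure.univ_pi_Ioi_ae_eq_Ici
      (μ := fun _ : Fin q => (volume : Measure ℝ)) (f := fun _ => (0:ℝ))
    rw [← volume_pi] at hae
    exact hae.symm
  calc (∫ t in Set.univ.pi fun _ : Fin q => Ioi (0:ℝ),
        ∫ g in Ioi (0:ℝ), (2:ℝ) ^ q * Np g t * Nq g t * gam (ν / 2) (ν / 2) g)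
      = ∫ t in Set.univ.pi fun _ : Fin q => Ioi (0:ℝ),
          ((2:ℝ) ^ q * tdp ν e * r ^ q) * tdq dfq (r • (m - t)) := by
        simp only [key]
    _ = ((2:ℝ) ^ q * tdp ν e * r ^ q) *
          ∫ t in Set.univ.pi fun _ : Fin q => Ioi (0:ℝ), tdq dfq (r • (m - t)) :=
        integral_const_mul _ _
    _ = (2:ℝ) ^ q * tdp ν (y - μ) * Tq dfq (r • m) := by rw [hcov, ← he]; ring
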